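/- For all real x with 0 < x < 1, 3 + (7/20) · x³ · arctan x < 2·(arcsin x / x) + (arctan x / x). -/

import Mathlib

open Real Set

-- arcsin lower bound: arcsin x > x + x^3/6 + 3x^5/40 + 5x^7/112 on (0,1)
lemma arcsin_lb {x : ℝ} (h1 : 0 < x) (h2 : x < 1) :
    x + x^3/6 + 3*x^5/40 + 5*x^7/112 < arcsin x := by
  have key : StrictMonoOn (fun y : ℝ => arcsin y - (y + y^3/6 + 3*y^5/40 + 5*y^7/112)) (Icc 0 1) := by
    apply strictMonoOn_of_deriv_pos (convex_Icc 0 1)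
    · exact (Real.continuous_arcsin.sub (by continuity)).continuousOn
    · intro y hy
      rw [interior_Icc] at hy
      obtain ⟨hy0, hy1⟩ := hy
      have hy1' : y ≠ 1 := ne_of_lt hy1
      have hy0' : y ≠ -1 := by linarith
      have hpoly : HasDerivAt (fun y : ℝ => y + y^3/6 + 3*y^5/40 + 5*y^7/112)
          (1 + y^2/2 + 3*y^4/8 + 5*y^6/16) y := by
        have : HasDerivAt (fun y : ℝ => y + y^3/6 + 3*y^5/40 + 5*y^7/112)
            (1 + (3*y^2)/6 + 3*(5*y^4)/40 + 5*(7*y^6)/112) y := by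
          exact (((hasDerivAt_id y).add ((hasDerivAt_pow 3 y).div_const 6)).add
            (((hasDerivAt_pow 5 y).const_mul 3).div_const 40)).add
            (((hasDerivAt_pow 7 y).const_mul 5).div_const 112)
        convert this using 1 <;> ring
      have harc := Real.hasDerivAt_arcsin hy0' hy1'
      have hd := (harc.sub hpoly).deriv
      erw [hd]
      have hs : 0 < Real.sqrt (1 - y^2) := by
        apply Real.sqrt_pos.2; nlinarith
      have hsq : Real.sqrt (1 - y^2) ^ 2 = 1 - y^2 := Real.sq_sqrt (by nlinarith)
      rw [sub_pos, lt_div_iff₀ hs]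
      set P := 1 + y^2/2 + 3*y^4/8 + 5*y^6/16 with hP_def
      have hkey : P^2 * (1 - y^2) < 1 := by
        rw [hP_def]
        nlinarith [pow_pos hy0 2, pow_pos hy0 4, pow_pos hy0 6, pow_pos hy0 8,
          pow_pos hy0 10, pow_pos hy0 12, pow_pos hy0 14, sq_nonneg (1 - y^2),
          mul_pos (pow_pos hy0 8) (sub_pos.2 (show y^2 < 1 by nlinarith))]
      have h2 : (P * Real.sqrt (1 - y^2))^2 = P^2 * (1 - y^2) := by
        rw [mul_pow, hsq]
      nlinarith [hkey, h2, sq_nonneg (P * Real.sqrt (1 - y^2) - 1)]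
  have h0 : (0:ℝ) ∈ Icc (0:ℝ) 1 := by constructor <;> norm_num
  have hx : x ∈ Icc (0:ℝ) 1 := ⟨le_of_lt h1, le_of_lt h2⟩
  have := key h0 hx h1
  simp [Real.arcsin_zero] at this
  linarith

-- arctan lower bound
lemma arctan_lb {x : ℝ} (h1 : 0 < x) :
    x - x^3/3 + x^5/5 - x^7/7 < arctan x := by
  have key : StrictMonoOn (fun y : ℝ => arctan y - (y - y^3/3 + y^5/5 - y^7/7)) (Icc 0 x) := by
    apply strictMonoOn_of_deriv_pos (convex_Icc 0 x)
    · exact (Real.continuous_arctan.sub (by continuity)).continuousOn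
    · intro y hy
      rw [interior_Icc] at hy
      obtain ⟨hy0, _⟩ := hy
      have hpoly : HasDerivAt (fun y : ℝ => y - y^3/3 + y^5/5 - y^7/7)
          (1 - y^2 + y^4 - y^6) y := by
        have : HasDerivAt (fun y : ℝ => y - y^3/3 + y^5/5 - y^7/7)
            (1 - (3*y^2)/3 + (5*y^4)/5 - (7*y^6)/7) y := by
          exact (((hasDerivAt_id y).sub ((hasDerivAt_pow 3 y).div_const 3)).add
            ((hasDerivAt_pow 5 y).div_const 5)).sub ((hasDerivAt_pow 7 y).div_const 7)
        convert this using 1 <;> ring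
      have hd := ((Real.hasDerivAt_arctan y).sub hpoly).deriv
      erw [hd]
      have hden : (0:ℝ) < 1 + y^2 := by positivity
      rw [sub_pos, lt_div_iff₀ hden]
      nlinarith [pow_pos hy0 8]
  have h0 : (0:ℝ) ∈ Icc (0:ℝ) x := ⟨le_refl 0, le_of_lt h1⟩
  have hx : x ∈ Icc (0:ℝ) x := ⟨le_of_lt h1, le_refl x⟩
  have := key h0 hx h1
  simp [Real.arctan_zero] at this
  linarith

-- arctan upper bound
lemma arctan_ub {x : ℝ} (h1 : 0 < x) :
    arctan x < x - x^3/3 + x^5/5 - x^7/7 + x^9/9 := by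
  have key : StrictMonoOn (fun y : ℝ => (y - y^3/3 + y^5/5 - y^7/7 + y^9/9) - arctan y) (Icc 0 x) := by
    apply strictMonoOn_of_deriv_pos (convex_Icc 0 x)
    · exact ((by continuity : Continuous fun y:ℝ => y - y^3/3 + y^5/5 - y^7/7 + y^9/9).sub Real.continuous_arctan).continuousOn
    · intro y hy
      rw [interior_Icc] at hy
      obtain ⟨hy0, _⟩ := hy
      have hpoly : HasDerivAt (fun y : ℝ => y - y^3/3 + y^5/5 - y^7/7 + y^9/9)
          (1 - y^2 + y^4 - y^6 + y^8) y := by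
        have : HasDerivAt (fun y : ℝ => y - y^3/3 + y^5/5 - y^7/7 + y^9/9)
            (1 - (3*y^2)/3 + (5*y^4)/5 - (7*y^6)/7 + (9*y^8)/9) y := by
          exact ((((hasDerivAt_id y).sub ((hasDerivAt_pow 3 y).div_const 3)).add
            ((hasDerivAt_pow 5 y).div_const 5)).sub ((hasDerivAt_pow 7 y).div_const 7)).add
            ((hasDerivAt_pow 9 y).div_const 9)
        convert this using 1 <;> ring
      have hd := (hpoly.sub (Real.hasDerivAt_arctan y)).deriv
      erw [hd]
      have hden : (0:ℝ) < 1 + y^2 := by positivity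
      rw [sub_pos, div_lt_iff₀ hden]
      nlinarith [pow_pos hy0 10]
  have h0 : (0:ℝ) ∈ Icc (0:ℝ) x := ⟨le_refl 0, le_of_lt h1⟩
  have hx : x ∈ Icc (0:ℝ) x := ⟨le_of_lt h1, le_refl x⟩
  have := key h0 hx h1
  simp [Real.arctan_zero] at this
  linarith

theorem stmt3 (x : ℝ) (h1 : 0 < x) (h2 : x < 1) :
    3 + (7/20) * x^3 * arctan x < 2 * (arcsin x / x) + arctan x / x := by
  have hA := arcsin_lb h1 h2
  have hB := arctan_lb h1
  have hC := arctan_ub h1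
  have heq : 2 * (arcsin x / x) + arctan x / x = (2 * arcsin x + arctan x) / x := by ring
  rw [heq, lt_div_iff₀ h1]
  have hx3 : 0 < x^3 := pow_pos h1 3
  nlinarith [mul_pos hx3 (sub_pos.2 h2), pow_pos h1 7, pow_pos h1 9, pow_pos h1 13,
    mul_pos (pow_pos h1 7) (sub_pos.2 (show x^2 < 1 by nlinarith)),
    mul_pos (mul_pos (pow_pos h1 7) (sub_pos.2 (show x^2 < 1 by nlinarith))) (sub_pos.2 (show x^2 < 1 by nlinarith)),
    mul_lt_mul_of_pos_left hC hx3]
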